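/- Let X be a filter of sentences and Y an idea of sentences with X ∩ Y = ∅. Define Z₀ = {φ : (P → φ) ∈ X}, Z₁ = {φ : (¬P → φ) ∈ X}, Z₂ = {φ : (P ∧ φ) ∈ Y}, Z₃ = {φ : (¬P ∧ φ) ∈ Y}, where P is a fixed sentence. Then Z₀ ∩ Z₂ = ∅ or Z₁ ∩ Z₃ = ∅. -/
import Mathlib


open FirstOrder FirstOrder.Language

/-- `W e` is the `e`-th recursively enumerable set of naturals. -/
def W (e : ℕ) : Set ℕ :=
  {x | ((Denumerable.ofNat Nat.Partrec.Code e).eval x).Dom}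

/-- A set of naturals is recursively enumerable if it is `W e` for some `e`. -/
def REset (A : Set ℕ) : Prop := ∃ e, W e = A

/-- The set of sentences provable in (i.e., logical consequences of) `T`. -/
def thmSet {L : Language} (T : L.Theory) : Set L.Sentence := {φ | T ⊨ᵇ φ}

/-- The set of sentences refutable in `T`. -/
def refSet {L : Language} (T : L.Theory) : Set L.Sentence := {φ | T ⊨ᵇ ∼φ}

/-- The set of Gödel numbers (codes) of a set of sentences. -/
def codes {L : Language} [Encodable L.Sentence] (S : Set L.Sentence) : Set ℕ :=
  Encodable.encode '' S

/-- A filter of sentences: closed under consequence and conjunction, omitting `⊥`. -/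
def SFilter {L : Language} (X : Set L.Sentence) : Prop :=
  (∀ α ∈ X, ∀ β : L.Sentence, ({α} : L.Theory) ⊨ᵇ β → β ∈ X) ∧
  (∀ α ∈ X, ∀ β ∈ X, α ⊓ β ∈ X) ∧ (⊥ : L.Sentence) ∉ X

/-- An idea of sentences: downward closed under provability and closed under
disjunction, omitting `⊤`. -/
def SIdea {L : Language} (Y : Set L.Sentence) : Prop :=
  (∀ α ∈ Y, ∀ β : L.Sentence, ({β} : L.Theory) ⊨ᵇ α → β ∈ Y) ∧
  (∀ α ∈ Y, ∀ β ∈ Y, α ⊔ β ∈ Y) ∧ (⊤ : L.Sentence) ∉ Y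

theorem filter_idea_case_split {L : Language} (X Y : Set L.Sentence)
    (hX : SFilter X) (hY : SIdea Y) (hdisj : X ∩ Y = ∅) (P : L.Sentence) :
    {φ : L.Sentence | (P ⟹ φ) ∈ X} ∩ {φ : L.Sentence | (P ⊓ φ) ∈ Y} = ∅ ∨
    {φ : L.Sentence | (∼P ⟹ φ) ∈ X} ∩ {φ : L.Sentence | (∼P ⊓ φ) ∈ Y} = ∅ := by

  by_contra hc
  push_neg at hc
  obtain ⟨h0, h1⟩ := hc
  obtain ⟨φ, hφ⟩ := h0
  obtain ⟨ψ, hψ⟩ := h1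
  obtain ⟨hφX, hφY⟩ := hφ
  obtain ⟨hψX, hψY⟩ := hψ
  simp only [Set.mem_setOf_eq] at hφX hφY hψX hψY
  obtain ⟨hXc, hXand, hXbot⟩ := hX
  obtain ⟨hYc, hYor, hYtop⟩ := hY
  -- the disjunction
  set D : L.Sentence := (P ⊓ φ) ⊔ (∼P ⊓ ψ) with hD
  have hDX : D ∈ X := by
    have hconj : ((P ⟹ φ) ⊓ (∼P ⟹ ψ)) ∈ X := hXand _ hφX _ hψX
    refine hXc _ hconj _ ?_
    rw [Theory.models_sentence_iff]
    intro M
    have h := M.is_model.realize_of_mem (φ := (P ⟹ φ) ⊓ (∼P ⟹ ψ)) (Set.mem_singleton _)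
    simp only [Sentence.Realize, Formula.Realize, BoundedFormula.realize_inf,
      BoundedFormula.realize_imp, BoundedFormula.realize_sup, BoundedFormula.realize_bot,
      BoundedFormula.realize_not, hD] at h ⊢
    tauto
  have hDY : D ∈ Y := hYor _ hφY _ hψY
  have : D ∈ X ∩ Y := ⟨hDX, hDY⟩
  rw [hdisj] at this
  exact this
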